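/- arXiv:2404.13136 — 2 statements merged into one kernel-verified Lean document; each statement's English description precedes it below -/
import Mathlib

section
/- If γ is the unique positive real root of x^4 + x^3 = x^2 + 2 and λ' = γ + 1/γ, then λ* < λ' < 95/47, where λ* = √ρ + 1/√ρ with ρ the unique real root of x^3 = x + 1. -/
/-- If `γ` is the unique positive real root of `x⁴ + x³ = x² + 2` and `λ' = γ + 1/γ`, then
`λ* < λ' < 95/47`, where `λ* = √ρ + 1/√ρ` with `ρ` the unique real root of `x³ = x + 1`. -/
theorem stmt2 (γ ρ : ℝ) (hγpos : 0 < γ) (hγ : γ ^ 4 + γ ^ 3 = γ ^ 2 + 2)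
    (hρ : ρ ^ 3 = ρ + 1) :
    Real.sqrt ρ + 1 / Real.sqrt ρ < γ + 1 / γ ∧ γ + 1 / γ < 95 / 47 := by
  have hγlb : (1.152 : ℝ) < γ := by
    nlinarith [pow_pos hγpos 3, pow_pos hγpos 2, sq_nonneg (γ - 1.152), sq_nonneg γ,
      mul_pos hγpos hγpos]
  have hγub : γ < 1.1568 := by
    nlinarith [pow_pos hγpos 3, pow_pos hγpos 2, sq_nonneg (γ - 1.1568), sq_nonneg γ,
      mul_pos hγpos hγpos]
  have hρlb : (1.324 : ℝ) < ρ := by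
    nlinarith [sq_nonneg (ρ - 1.324), sq_nonneg ρ, sq_nonneg (ρ + 1.324), sq_nonneg (ρ + 1)]
  have hρub : ρ < 1.325 := by
    nlinarith [sq_nonneg (ρ - 1.325), sq_nonneg ρ, sq_nonneg (ρ + 1.325), sq_nonneg (ρ + 1)]
  have hρpos : (0 : ℝ) < ρ := by linarith
  set s := Real.sqrt ρ with hs
  have hspos : 0 < s := Real.sqrt_pos.mpr hρpos
  have hs2 : s ^ 2 = ρ := Real.sq_sqrt hρpos.le
  have hs1 : 1 < s := by nlinarith
  have hsγ : s < γ := by nlinarith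
  constructor
  · have hsg : 0 < s * γ := mul_pos hspos hγpos
    rw [show s + 1 / s = (s ^ 2 * γ + γ) / (s * γ) by field_simp,
        show γ + 1 / γ = (γ ^ 2 * s + s) / (s * γ) by field_simp,
        div_lt_div_iff₀ hsg hsg]
    nlinarith [mul_pos (mul_pos (sub_pos.mpr hsγ) (sub_pos.mpr hs1)) hγpos,
      mul_pos (sub_pos.mpr hsγ) (sub_pos.mpr hs1)]
  · rw [show γ + 1 / γ = (γ ^ 2 + 1) / γ by field_simp,
        div_lt_div_iff₀ hγpos (by norm_num : (0:ℝ) < 47)]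
    nlinarith [mul_pos (sub_pos.mpr hγlb) (sub_pos.mpr hγub)]
end

section
/- Let F_R be a rooted graph and ℓ ∈ ℕ. If the smallest adjacency eigenvalue of the augmented path extension Λ(F_R, ℓ) is less than −2, then the smallest adjacency eigenvalue of Λ(F_R, ℓ+1) is also less than −2. -/
open Matrix Filter
open scoped Classical

noncomputable def adjM {α : Type*} [Fintype α] (G : SimpleGraph α) : Matrix α α ℝ :=
  fun x y => if G.Adj x y then 1 else 0

noncomputable def minEig {α : Type*} [Fintype α] (G : SimpleGraph α) : ℝ :=
  sInf {μ : ℝ | ∃ x : α → ℝ, x ≠ 0 ∧ adjM G *ᵥ x = μ • x}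

/-- The augmented path extension `Λ(F_R, ℓ)`: to the disjoint union of `F` and the gadget
with vertices `a = 0`, `b = 1`, `c = 2` (roots `a`, `b`, edge `a–c`), add a path
`v_0 … v_ℓ` (vertices `Fin (ℓ+1)`), joining `v_0` to every vertex of `R` and `v_ℓ` to the
two roots `a`, `b` of the gadget. -/
def ape {V : Type*} (F : SimpleGraph V) (R : Set V) (ℓ : ℕ) :
    SimpleGraph (V ⊕ Fin (ℓ + 1) ⊕ Fin 3) :=
  SimpleGraph.fromRel (fun x y =>
    match x, y with
    | Sum.inl u, Sum.inl v => F.Adj u v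
    | Sum.inl u, Sum.inr (Sum.inl i) => u ∈ R ∧ (i : ℕ) = 0
    | Sum.inr (Sum.inl i), Sum.inr (Sum.inl j) => (j : ℕ) = (i : ℕ) + 1
    | Sum.inr (Sum.inl i), Sum.inr (Sum.inr g) => (i : ℕ) = ℓ ∧ (g = 0 ∨ g = 1)
    | Sum.inr (Sum.inr g), Sum.inr (Sum.inr h) => g = 0 ∧ h = 2
    | _, _ => False)

section ApeAdj
variable {V : Type*} {F : SimpleGraph V} {R : Set V} {ℓ : ℕ}

lemma ape_adj_ll {u v : V} : (ape F R ℓ).Adj (.inl u) (.inl v) ↔ F.Adj u v := by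
  simp only [ape, SimpleGraph.fromRel_adj, ne_eq, Sum.inl.injEq]
  constructor
  · rintro ⟨h, h1 | h1⟩
    · exact h1
    · exact h1.symm
  · intro h
    exact ⟨h.ne, Or.inl h⟩

lemma ape_adj_lp {u : V} {i : Fin (ℓ+1)} :
    (ape F R ℓ).Adj (.inl u) (.inr (.inl i)) ↔ u ∈ R ∧ (i : ℕ) = 0 := by
  simp only [ape, SimpleGraph.fromRel_adj, ne_eq]
  constructor
  · rintro ⟨h, h1 | h1⟩
    · exact h1
    · exact h1.elim
  · intro h
    exact ⟨by simp, Or.inl h⟩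

lemma ape_adj_pl {u : V} {i : Fin (ℓ+1)} :
    (ape F R ℓ).Adj (.inr (.inl i)) (.inl u) ↔ u ∈ R ∧ (i : ℕ) = 0 := by
  rw [SimpleGraph.adj_comm]; exact ape_adj_lp

lemma ape_adj_pp {i j : Fin (ℓ+1)} :
    (ape F R ℓ).Adj (.inr (.inl i)) (.inr (.inl j)) ↔
      (j : ℕ) = (i : ℕ) + 1 ∨ (i : ℕ) = (j : ℕ) + 1 := by
  simp only [ape, SimpleGraph.fromRel_adj, ne_eq, Sum.inr.injEq, Sum.inl.injEq]
  constructor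
  · rintro ⟨h, h1 | h1⟩
    · exact Or.inl h1
    · exact Or.inr h1
  · intro h1
    refine ⟨fun hc => ?_, by tauto⟩
    subst hc
    omega

lemma ape_adj_pg {i : Fin (ℓ+1)} {g : Fin 3} :
    (ape F R ℓ).Adj (.inr (.inl i)) (.inr (.inr g)) ↔ (i : ℕ) = ℓ ∧ (g = 0 ∨ g = 1) := by
  simp only [ape, SimpleGraph.fromRel_adj, ne_eq]
  constructor
  · rintro ⟨h, h1 | h1⟩
    · exact h1
    · exact h1.elim
  · intro h
    exact ⟨by simp, Or.inl h⟩

lemma ape_adj_gp {i : Fin (ℓ+1)} {g : Fin 3} :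
    (ape F R ℓ).Adj (.inr (.inr g)) (.inr (.inl i)) ↔ (i : ℕ) = ℓ ∧ (g = 0 ∨ g = 1) := by
  rw [SimpleGraph.adj_comm]; exact ape_adj_pg

lemma ape_adj_lg {u : V} {g : Fin 3} :
    (ape F R ℓ).Adj (.inl u) (.inr (.inr g)) ↔ False := by
  simp only [ape, SimpleGraph.fromRel_adj, ne_eq]
  constructor
  · rintro ⟨h, h1 | h1⟩ <;> exact h1
  · exact False.elim

lemma ape_adj_gl {u : V} {g : Fin 3} :
    (ape F R ℓ).Adj (.inr (.inr g)) (.inl u) ↔ False := by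
  rw [SimpleGraph.adj_comm]; exact ape_adj_lg

lemma ape_adj_gg {g h : Fin 3} :
    (ape F R ℓ).Adj (.inr (.inr g)) (.inr (.inr h)) ↔ (g = 0 ∧ h = 2) ∨ (h = 0 ∧ g = 2) := by
  simp only [ape, SimpleGraph.fromRel_adj, ne_eq, Sum.inr.injEq]
  constructor
  · rintro ⟨hne, h1 | h1⟩
    · exact Or.inl h1
    · exact Or.inr h1
  · intro h1
    refine ⟨fun hc => ?_, by tauto⟩
    rcases h1 with ⟨rfl, rfl⟩ | ⟨rfl, rfl⟩ <;> simp_all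

variable [Fintype V]

lemma adjM_ll {u v : V} :
    adjM (ape F R ℓ) (.inl u) (.inl v) = if F.Adj u v then 1 else 0 :=
  if_congr ape_adj_ll rfl rfl

lemma adjM_lp {u : V} {i : Fin (ℓ+1)} :
    adjM (ape F R ℓ) (.inl u) (.inr (.inl i)) = if u ∈ R ∧ (i : ℕ) = 0 then 1 else 0 :=
  if_congr ape_adj_lp rfl rfl

lemma adjM_pl {u : V} {i : Fin (ℓ+1)} :
    adjM (ape F R ℓ) (.inr (.inl i)) (.inl u) = if u ∈ R ∧ (i : ℕ) = 0 then 1 else 0 :=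
  if_congr ape_adj_pl rfl rfl

lemma adjM_pp {i j : Fin (ℓ+1)} :
    adjM (ape F R ℓ) (.inr (.inl i)) (.inr (.inl j)) =
      if (j : ℕ) = (i : ℕ) + 1 ∨ (i : ℕ) = (j : ℕ) + 1 then 1 else 0 :=
  if_congr ape_adj_pp rfl rfl

lemma adjM_pg {i : Fin (ℓ+1)} {g : Fin 3} :
    adjM (ape F R ℓ) (.inr (.inl i)) (.inr (.inr g)) =
      if (i : ℕ) = ℓ ∧ (g = 0 ∨ g = 1) then 1 else 0 :=
  if_congr ape_adj_pg rfl rfl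

lemma adjM_gp {i : Fin (ℓ+1)} {g : Fin 3} :
    adjM (ape F R ℓ) (.inr (.inr g)) (.inr (.inl i)) =
      if (i : ℕ) = ℓ ∧ (g = 0 ∨ g = 1) then 1 else 0 :=
  if_congr ape_adj_gp rfl rfl

lemma adjM_lg {u : V} {g : Fin 3} :
    adjM (ape F R ℓ) (.inl u) (.inr (.inr g)) = 0 :=
  if_neg (fun h => ape_adj_lg.mp h)

lemma adjM_gl {u : V} {g : Fin 3} :
    adjM (ape F R ℓ) (.inr (.inr g)) (.inl u) = 0 :=
  if_neg (fun h => ape_adj_gl.mp h)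

lemma adjM_gg {g h : Fin 3} :
    adjM (ape F R ℓ) (.inr (.inr g)) (.inr (.inr h)) =
      if (g = 0 ∧ h = 2) ∨ (h = 0 ∧ g = 2) then 1 else 0 :=
  if_congr ape_adj_gg rfl rfl

end ApeAdj

lemma sum_reindex {V : Type*} [Fintype V] {ℓ : ℕ} (f : V ⊕ Fin (ℓ + 1 + 1) ⊕ Fin 3 → ℝ) :
    ∑ p, f p = f (Sum.inr (Sum.inl 0)) +
      ∑ p : V ⊕ Fin (ℓ + 1) ⊕ Fin 3, f (Sum.map id (Sum.map Fin.succ id) p) := by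
  rw [Fintype.sum_sum_type, Fintype.sum_sum_type, Fintype.sum_sum_type, Fintype.sum_sum_type,
    Fin.sum_univ_succ]
  simp only [Sum.map_inl, Sum.map_inr, id_eq]
  ring

lemma minEig_lt_neg_two_iff {α : Type*} [Fintype α] [Nonempty α] (G : SimpleGraph α) :
    minEig G < -2 ↔
      ∃ x : α → ℝ, ∑ p, (adjM G *ᵥ x) p * x p < -2 * ∑ p, x p * x p := by
  classical
  set A := adjM G with hA
  have hherm : A.IsHermitian := by
    ext p q
    simp [A, adjM, Matrix.conjTranspose_apply, SimpleGraph.adj_comm]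
  set T : EuclideanSpace ℝ α →ₗ[ℝ] EuclideanSpace ℝ α := Matrix.toEuclideanLin A with hTdef
  have hT : T.IsSymmetric := Matrix.isHermitian_iff_isSymmetric.mp hherm
  haveI : Nontrivial (EuclideanSpace ℝ α) := by
    obtain ⟨a⟩ := ‹Nonempty α›
    refine ⟨(WithLp.equiv 2 (α → ℝ)).symm (fun _ => 0), (WithLp.equiv 2 (α → ℝ)).symm (fun _ => 1),
      fun hcon => ?_⟩
    exact one_ne_zero (congrFun ((WithLp.equiv 2 (α → ℝ)).symm.injective.eq_iff.mp hcon).symm a)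
  set toE : (α → ℝ) → EuclideanSpace ℝ α := fun v => (WithLp.equiv 2 (α → ℝ)).symm v with htoE
  have hTapp : ∀ v : α → ℝ, T (toE v) = toE (A *ᵥ v) := fun v => rfl
  have hinner : ∀ u v : α → ℝ, (inner (𝕜 := ℝ) (toE u) (toE v)) = ∑ p, u p * v p := by
    intro u v
    simp [toE, PiLp.inner_apply, RCLike.inner_apply]
    exact Finset.sum_congr rfl fun p _ => mul_comm _ _
  have hnorm : ∀ v : α → ℝ, ‖toE v‖ ^ 2 = ∑ p, v p * v p := by
    intro v
    rw [← real_inner_self_eq_norm_sq]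
    exact hinner v v
  have htoE0 : ∀ v : α → ℝ, v ≠ 0 → toE v ≠ 0 := by
    intro v hv hcon
    exact hv ((WithLp.equiv 2 (α → ℝ)).symm.injective (by simpa [toE] using hcon))
  set Tc := LinearMap.toContinuousLinearMap T with hTc
  have hRB : ∀ v : EuclideanSpace ℝ α, v ≠ 0 →
      -‖Tc‖ ≤ (inner (𝕜 := ℝ) (T v) v) / ‖v‖ ^ 2 := by
    intro v hv
    have hnv : 0 < ‖v‖ ^ 2 := by
      have := norm_pos_iff.mpr hv
      positivity
    rw [le_div_iff₀ hnv]
    have h1 : |(inner (𝕜 := ℝ) (T v) v)| ≤ ‖T v‖ * ‖v‖ := abs_real_inner_le_norm _ _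
    have h2 : ‖T v‖ ≤ ‖Tc‖ * ‖v‖ := Tc.le_opNorm v
    have h3 := neg_abs_le (inner (𝕜 := ℝ) (T v) v)
    nlinarith [norm_nonneg v, norm_nonneg (T v)]
  set μ₀ : ℝ := ⨅ x : { x : EuclideanSpace ℝ α // x ≠ 0 },
      RCLike.re (inner (𝕜 := ℝ) (T x) x) / ‖(x : EuclideanSpace ℝ α)‖ ^ 2 with hμ₀
  have hbddR : BddBelow (Set.range fun x : { x : EuclideanSpace ℝ α // x ≠ 0 } =>
      RCLike.re (inner (𝕜 := ℝ) (T x) x) / ‖(x : EuclideanSpace ℝ α)‖ ^ 2) := by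
    refine ⟨-‖Tc‖, ?_⟩
    rintro _ ⟨x, rfl⟩
    simpa [RCLike.re_to_real] using hRB x x.2
  have hev : Module.End.HasEigenvalue T μ₀ := by
    have := hT.hasEigenvalue_iInf_of_finiteDimensional
    exact this
  obtain ⟨v, hv⟩ := hev.exists_hasEigenvector
  have hveq : A *ᵥ (WithLp.equiv 2 (α → ℝ) v) = μ₀ • (WithLp.equiv 2 (α → ℝ) v) := by
    have := hv.apply_eq_smul
    exact congrArg (WithLp.equiv 2 (α → ℝ)) this
  set S := {μ : ℝ | ∃ x : α → ℝ, x ≠ 0 ∧ adjM G *ᵥ x = μ • x} with hS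
  have hv0 : (WithLp.equiv 2 (α → ℝ)) v ≠ 0 := by
    intro hcon
    exact hv.2 ((WithLp.equiv 2 (α → ℝ)).injective (by simpa using hcon))
  have hμ₀S : μ₀ ∈ S := ⟨WithLp.equiv 2 (α → ℝ) v, hv0, hveq⟩
  have hray : ∀ (μ : ℝ) (x : α → ℝ), x ≠ 0 → adjM G *ᵥ x = μ • x →
      (inner (𝕜 := ℝ) (T (toE x)) (toE x)) / ‖toE x‖ ^ 2 = μ := by
    intro μ x hx0 hxe
    have hx0' : toE x ≠ 0 := htoE0 x hx0
    have hnx : (0:ℝ) < ‖toE x‖ ^ 2 := by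
      have := norm_pos_iff.mpr hx0'
      positivity
    have heq : (inner (𝕜 := ℝ) (T (toE x)) (toE x)) = μ * ‖toE x‖ ^ 2 := by
      have h1 : T (toE x) = μ • toE x := by
        rw [hTapp, hxe]
        rfl
      rw [h1, real_inner_smul_left, real_inner_self_eq_norm_sq]
    rw [heq]
    field_simp
  have hSbdd : BddBelow S := by
    refine ⟨-‖Tc‖, ?_⟩
    rintro μ ⟨x, hx0, hxe⟩
    have hq := hray μ x hx0 hxe
    have := hRB (toE x) (htoE0 x hx0)
    rw [hq] at this
    exact this
  have hsum_eq : ∀ (μ : ℝ) (x : α → ℝ), x ≠ 0 → adjM G *ᵥ x = μ • x →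
      ∑ p, (adjM G *ᵥ x) p * x p = μ * ∑ p, x p * x p := by
    intro μ x hx0 hxe
    have h1 : ∑ p, (adjM G *ᵥ x) p * x p = (inner (𝕜 := ℝ) (T (toE x)) (toE x)) := by
      rw [hTapp]
      exact (hinner (A *ᵥ x) x).symm
    have hq := hray μ x hx0 hxe
    have hnx : (0:ℝ) < ‖toE x‖ ^ 2 := by
      have := norm_pos_iff.mpr (htoE0 x hx0)
      positivity
    have h2 := (div_eq_iff (ne_of_gt hnx)).mp hq
    rw [h1, h2, hnorm]
  constructor
  · intro h
    obtain ⟨μ, hμS, hμlt⟩ := exists_lt_of_csInf_lt ⟨μ₀, hμ₀S⟩ h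
    obtain ⟨x, hx0, hxe⟩ := hμS
    refine ⟨x, ?_⟩
    rw [hsum_eq μ x hx0 hxe]
    have hpos : 0 < ∑ p, x p * x p := by
      rw [← hnorm x]
      have := norm_pos_iff.mpr (htoE0 x hx0)
      positivity
    nlinarith
  · rintro ⟨x, hx⟩
    have hx0 : x ≠ 0 := by
      rintro rfl
      simp at hx
    have hx0' : toE x ≠ 0 := htoE0 x hx0
    have hnx : (0:ℝ) < ‖toE x‖ ^ 2 := by
      have := norm_pos_iff.mpr hx0'
      positivity
    have hq : (inner (𝕜 := ℝ) (T (toE x)) (toE x)) / ‖toE x‖ ^ 2 < -2 := by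
      rw [div_lt_iff₀ hnx]
      have h1 : (inner (𝕜 := ℝ) (T (toE x)) (toE x)) = ∑ p, (adjM G *ᵥ x) p * x p := by
        rw [hTapp]
        exact hinner (A *ᵥ x) x
      rw [h1, hnorm x]
      linarith [hx]
    have hle : μ₀ ≤ (inner (𝕜 := ℝ) (T (toE x)) (toE x)) / ‖toE x‖ ^ 2 := by
      have := ciInf_le hbddR (⟨toE x, hx0'⟩ : { x : EuclideanSpace ℝ α // x ≠ 0 })
      exact this
    calc minEig G ≤ μ₀ := csInf_le hSbdd hμ₀S
    _ ≤ _ := hle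
    _ < -2 := hq

/-- If the smallest eigenvalue of the augmented path extension `Λ(F_R, ℓ)` is `< -2`,
then so is that of `Λ(F_R, ℓ+1)`. -/
theorem stmt7 {V : Type*} [Fintype V] (F : SimpleGraph V) (R : Set V) (hR : R.Nonempty)
    (ℓ : ℕ) (h : minEig (ape F R ℓ) < -2) : minEig (ape F R (ℓ + 1)) < -2 := by
  classical
  haveI : Nonempty (V ⊕ Fin (ℓ + 1) ⊕ Fin 3) := ⟨Sum.inr (Sum.inr 0)⟩
  haveI : Nonempty (V ⊕ Fin (ℓ + 1 + 1) ⊕ Fin 3) := ⟨Sum.inr (Sum.inr 0)⟩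
  rw [minEig_lt_neg_two_iff] at h ⊢
  obtain ⟨x, hx⟩ := h
  set A := adjM (ape F R ℓ) with hAdef
  set A' := adjM (ape F R (ℓ + 1)) with hA'def
  set φ : V ⊕ Fin (ℓ + 1) ⊕ Fin 3 → V ⊕ Fin (ℓ + 1 + 1) ⊕ Fin 3 :=
    Sum.map id (Sum.map Fin.succ id) with hφdef
  set y : V ⊕ Fin (ℓ + 1 + 1) ⊕ Fin 3 → ℝ :=
    Sum.elim (fun v => -x (Sum.inl v))
      (Sum.elim (fun i => Fin.cases (-x (Sum.inr (Sum.inl 0))) (fun j => x (Sum.inr (Sum.inl j))) i)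
        (fun g => x (Sum.inr (Sum.inr g)))) with hydef
  refine ⟨y, ?_⟩
  have hy1 : ∀ v : V, y (Sum.inl v) = -x (Sum.inl v) := fun _ => rfl
  have hy2 : ∀ i : Fin (ℓ + 1), y (Sum.inr (Sum.inl i.succ)) = x (Sum.inr (Sum.inl i)) := by
    intro i; simp [hydef]
  have hy3 : ∀ g : Fin 3, y (Sum.inr (Sum.inr g)) = x (Sum.inr (Sum.inr g)) := fun _ => rfl
  have hy0 : y (Sum.inr (Sum.inl 0)) = -x (Sum.inr (Sum.inl 0)) := by
    simp [hydef]
  have hφ1 : ∀ v : V, φ (Sum.inl v) = Sum.inl v := fun _ => rfl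
  have hφ2 : ∀ i : Fin (ℓ + 1), φ (Sum.inr (Sum.inl i)) = Sum.inr (Sum.inl i.succ) := fun _ => rfl
  have hφ3 : ∀ g : Fin 3, φ (Sum.inr (Sum.inr g)) = Sum.inr (Sum.inr g) := fun _ => rfl
  have hQ'e : ∑ p, (A' *ᵥ y) p * y p = ∑ p, ∑ q, A' p q * y q * y p := by
    refine Finset.sum_congr rfl fun p _ => ?_
    simp [Matrix.mulVec, dotProduct, Finset.sum_mul, add_mul]
  have hQe : ∑ p, (A *ᵥ x) p * x p = ∑ p, ∑ q, A p q * x q * x p := by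
    refine Finset.sum_congr rfl fun p _ => ?_
    simp [Matrix.mulVec, dotProduct, Finset.sum_mul, add_mul]
  -- abbreviations
  have hd0 : A' (Sum.inr (Sum.inl 0)) (Sum.inr (Sum.inl 0)) = 0 := by
    rw [hA'def]
    exact if_neg (SimpleGraph.irrefl _)
  have hsymm' : ∀ p q, A' p q = A' q p := by
    intro p q
    rw [hA'def]
    exact if_congr ((ape F R (ℓ+1)).adj_comm p q) rfl rfl
  -- T1
  have hT1 : ∑ q : V ⊕ Fin (ℓ + 1) ⊕ Fin 3,
      A' (Sum.inr (Sum.inl 0)) (φ q) * y (φ q) * y (Sum.inr (Sum.inl 0))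
      = (∑ v : V, if v ∈ R then x (Sum.inl v) else 0) * x (Sum.inr (Sum.inl 0))
        - x (Sum.inr (Sum.inl 0)) * x (Sum.inr (Sum.inl 0)) := by
    rw [Fintype.sum_sum_type, Fintype.sum_sum_type]
    have c1 : ∀ v : V, A' (Sum.inr (Sum.inl 0)) (φ (Sum.inl v)) * y (φ (Sum.inl v)) * y (Sum.inr (Sum.inl 0))
        = (if v ∈ R then x (Sum.inl v) else 0) * x (Sum.inr (Sum.inl 0)) := by
      intro v
      rw [hφ1, hy1, hy0, hA'def, adjM_pl]
      by_cases hv : v ∈ R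
      · rw [if_pos ⟨hv, by simp⟩, if_pos hv]; ring
      · rw [if_neg (fun hc => hv hc.1), if_neg hv]; ring
    have c2 : ∀ j : Fin (ℓ + 1), A' (Sum.inr (Sum.inl 0)) (φ (Sum.inr (Sum.inl j))) * y (φ (Sum.inr (Sum.inl j))) * y (Sum.inr (Sum.inl 0))
        = if j = (0 : Fin (ℓ + 1)) then
            -(x (Sum.inr (Sum.inl j)) * x (Sum.inr (Sum.inl 0))) else 0 := by
      intro j
      rw [hφ2, hy2, hy0, hA'def, adjM_pp]
      by_cases hj : j = (0 : Fin (ℓ + 1))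
      · rw [if_pos (Or.inl (by simp [hj])), if_pos hj]
        ring
      · rw [if_neg, if_neg hj]
        · ring
        · rintro (hc | hc)
          · refine hj (Fin.ext ?_)
            simp only [Fin.val_succ, Fin.val_zero] at hc ⊢
            omega
          · simp only [Fin.val_succ, Fin.val_zero] at hc
            omega
    have c3 : ∀ g : Fin 3, A' (Sum.inr (Sum.inl 0)) (φ (Sum.inr (Sum.inr g))) * y (φ (Sum.inr (Sum.inr g))) * y (Sum.inr (Sum.inl 0)) = 0 := by
      intro g
      rw [hφ3, hA'def, adjM_pg, if_neg]
      · ring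
      · rintro ⟨hc, -⟩
        simp at hc
    simp only [c1, c2, c3]
    rw [Finset.sum_ite_eq', ← Finset.sum_mul]
    simp only [Finset.mem_univ, if_true, Finset.sum_const_zero]
    ring
  have hT2 : ∑ p : V ⊕ Fin (ℓ + 1) ⊕ Fin 3,
      A' (φ p) (Sum.inr (Sum.inl 0)) * y (Sum.inr (Sum.inl 0)) * y (φ p)
      = (∑ v : V, if v ∈ R then x (Sum.inl v) else 0) * x (Sum.inr (Sum.inl 0))
        - x (Sum.inr (Sum.inl 0)) * x (Sum.inr (Sum.inl 0)) := by
    rw [← hT1]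
    refine Finset.sum_congr rfl fun p _ => ?_
    rw [hsymm']
    ring
  -- characteristic functions
  set χF : V ⊕ Fin (ℓ + 1) ⊕ Fin 3 → ℝ := Sum.elim (fun _ => 1) (fun _ => 0) with hχF
  set χP : V ⊕ Fin (ℓ + 1) ⊕ Fin 3 → ℝ :=
    Sum.elim (fun _ => 0) (Sum.elim (fun _ => 1) (fun _ => 0)) with hχP
  have pc : ∀ p q, A' (φ p) (φ q) * y (φ q) * y (φ p)
      = A p q * x q * x p - A p q * x q * x p * (χF p * χP q + χP p * χF q) := by
    rintro (u | i | g) (v | j | h')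
    · simp only [hφ1, hy1, hχF, hχP, Sum.elim_inl, hA'def, hAdef, adjM_ll]
      ring
    · simp only [hφ1, hφ2, hy2, hy1, hχF, hχP, Sum.elim_inl, Sum.elim_inr, hA'def, adjM_lp]
      rw [if_neg (by simp [Fin.val_succ])]
      ring
    · simp only [hφ1, hφ3, hy3, hy1, hχF, hχP, Sum.elim_inl, Sum.elim_inr, hA'def, hAdef,
        adjM_lg]
      ring
    · simp only [hφ1, hφ2, hy1, hy2, hχF, hχP, Sum.elim_inl, Sum.elim_inr, hA'def, adjM_pl]
      rw [if_neg (by simp [Fin.val_succ])]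
      ring
    · simp only [hφ2, hy2, hχF, hχP, Sum.elim_inl, Sum.elim_inr, hA'def, hAdef, adjM_pp]
      by_cases hc : (j : ℕ) = (i : ℕ) + 1 ∨ (i : ℕ) = (j : ℕ) + 1
      · rw [if_pos hc, if_pos (by simp only [Fin.val_succ]; omega)]
        ring
      · rw [if_neg hc, if_neg (by simp only [Fin.val_succ]; omega)]
        ring
    · simp only [hφ2, hφ3, hy2, hy3, hχF, hχP, Sum.elim_inl, Sum.elim_inr, hA'def, hAdef,
        adjM_pg]
      by_cases hc : (i : ℕ) = ℓ ∧ (h' = 0 ∨ h' = 1)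
      · rw [if_pos ⟨by simp [Fin.val_succ, hc.1], hc.2⟩, if_pos hc]
        ring
      · rw [if_neg ?_, if_neg hc]
        · ring
        · rintro ⟨hc1, hc2⟩
          exact hc ⟨by simp only [Fin.val_succ] at hc1; omega, hc2⟩
    · simp only [hφ1, hφ3, hy1, hy3, hχF, hχP, Sum.elim_inl, Sum.elim_inr, hA'def, hAdef,
        adjM_gl]
      ring
    · simp only [hφ2, hφ3, hy2, hy3, hχF, hχP, Sum.elim_inl, Sum.elim_inr, hA'def, hAdef,
        adjM_gp]
      by_cases hc : (j : ℕ) = ℓ ∧ (g = 0 ∨ g = 1)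
      · rw [if_pos ⟨by simp [Fin.val_succ, hc.1], hc.2⟩, if_pos hc]
        ring
      · rw [if_neg ?_, if_neg hc]
        · ring
        · rintro ⟨hc1, hc2⟩
          exact hc ⟨by simp only [Fin.val_succ] at hc1; omega, hc2⟩
    · simp only [hφ3, hy3, hχF, hχP, Sum.elim_inr, hA'def, hAdef, adjM_gg]
      by_cases hc : (g = 0 ∧ h' = 2) ∨ (h' = 0 ∧ g = 2)
      · rw [if_pos hc]
        ring
      · rw [if_neg hc]
        ring
  have csum : ∑ p, ∑ q, A p q * x q * x p * (χF p * χP q + χP p * χF q)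
      = 2 * ((∑ v : V, if v ∈ R then x (Sum.inl v) else 0) * x (Sum.inr (Sum.inl 0))) := by
    have inner1 : ∀ u : V, ∑ q, A (Sum.inl u) q * x q * x (Sum.inl u) * (χF (Sum.inl u) * χP q + χP (Sum.inl u) * χF q)
        = (if u ∈ R then x (Sum.inl u) else 0) * x (Sum.inr (Sum.inl 0)) := by
      intro u
      rw [Fintype.sum_sum_type, Fintype.sum_sum_type]
      have t1 : ∀ v : V, A (Sum.inl u) (Sum.inl v) * x (Sum.inl v) * x (Sum.inl u) * (χF (Sum.inl u) * χP (Sum.inl v) + χP (Sum.inl u) * χF (Sum.inl v)) = 0 := by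
        intro v
        simp only [hχF, hχP, Sum.elim_inl]
        ring
      have t2 : ∀ j : Fin (ℓ + 1), A (Sum.inl u) (Sum.inr (Sum.inl j)) * x (Sum.inr (Sum.inl j)) * x (Sum.inl u) * (χF (Sum.inl u) * χP (Sum.inr (Sum.inl j)) + χP (Sum.inl u) * χF (Sum.inr (Sum.inl j)))
          = if j = (0 : Fin (ℓ + 1)) then (if u ∈ R then x (Sum.inl u) else 0) * x (Sum.inr (Sum.inl j)) else 0 := by
        intro j
        simp only [hχF, hχP, Sum.elim_inl, Sum.elim_inr, hAdef, adjM_lp]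
        by_cases hu : u ∈ R
        · by_cases hj : j = (0 : Fin (ℓ + 1))
          · rw [if_pos ⟨hu, by simp [hj]⟩, if_pos hj, if_pos hu]
            ring
          · rw [if_neg, if_neg hj]
            · ring
            · rintro ⟨-, hc⟩
              exact hj (Fin.ext (by simpa using hc))
        · rw [if_neg (fun hc => hu hc.1), if_neg hu]
          split_ifs <;> ring
      have t3 : ∀ g : Fin 3, A (Sum.inl u) (Sum.inr (Sum.inr g)) * x (Sum.inr (Sum.inr g)) * x (Sum.inl u) * (χF (Sum.inl u) * χP (Sum.inr (Sum.inr g)) + χP (Sum.inl u) * χF (Sum.inr (Sum.inr g))) = 0 := by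
        intro g
        simp only [hχF, hχP, Sum.elim_inl, Sum.elim_inr]
        ring
      simp only [t1, t2, t3]
      rw [Finset.sum_ite_eq']
      simp only [Finset.mem_univ, if_true, Finset.sum_const_zero]
      ring
    have inner2 : ∀ i : Fin (ℓ + 1), ∑ q, A (Sum.inr (Sum.inl i)) q * x q * x (Sum.inr (Sum.inl i)) * (χF (Sum.inr (Sum.inl i)) * χP q + χP (Sum.inr (Sum.inl i)) * χF q)
        = if i = (0 : Fin (ℓ + 1)) then
            (∑ v : V, if v ∈ R then x (Sum.inl v) else 0) * x (Sum.inr (Sum.inl i)) else 0 := by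
      intro i
      rw [Fintype.sum_sum_type, Fintype.sum_sum_type]
      have s1 : ∀ v : V, A (Sum.inr (Sum.inl i)) (Sum.inl v) * x (Sum.inl v) * x (Sum.inr (Sum.inl i)) * (χF (Sum.inr (Sum.inl i)) * χP (Sum.inl v) + χP (Sum.inr (Sum.inl i)) * χF (Sum.inl v))
          = if i = (0 : Fin (ℓ + 1)) then (if v ∈ R then x (Sum.inl v) else 0) * x (Sum.inr (Sum.inl i)) else 0 := by
        intro v
        simp only [hχF, hχP, Sum.elim_inl, Sum.elim_inr, hAdef, adjM_pl]
        by_cases hv : v ∈ R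
        · by_cases hi : i = (0 : Fin (ℓ + 1))
          · rw [if_pos ⟨hv, by simp [hi]⟩, if_pos hi, if_pos hv]
            ring
          · rw [if_neg, if_neg hi]
            · ring
            · rintro ⟨-, hc⟩
              exact hi (Fin.ext (by simpa using hc))
        · rw [if_neg (fun hc => hv hc.1), if_neg hv]
          split_ifs <;> ring
      have s2 : ∀ j : Fin (ℓ + 1), A (Sum.inr (Sum.inl i)) (Sum.inr (Sum.inl j)) * x (Sum.inr (Sum.inl j)) * x (Sum.inr (Sum.inl i)) * (χF (Sum.inr (Sum.inl i)) * χP (Sum.inr (Sum.inl j)) + χP (Sum.inr (Sum.inl i)) * χF (Sum.inr (Sum.inl j))) = 0 := by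
        intro j
        simp only [hχF, hχP, Sum.elim_inl, Sum.elim_inr]
        ring
      have s3 : ∀ g : Fin 3, A (Sum.inr (Sum.inl i)) (Sum.inr (Sum.inr g)) * x (Sum.inr (Sum.inr g)) * x (Sum.inr (Sum.inl i)) * (χF (Sum.inr (Sum.inl i)) * χP (Sum.inr (Sum.inr g)) + χP (Sum.inr (Sum.inl i)) * χF (Sum.inr (Sum.inr g))) = 0 := by
        intro g
        simp only [hχF, hχP, Sum.elim_inl, Sum.elim_inr]
        ring
      by_cases hi : i = (0 : Fin (ℓ + 1))
      · simp only [s1, s2, s3, if_pos hi, Finset.sum_const_zero, add_zero, ← Finset.sum_mul]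
      · simp only [s1, s2, s3, if_neg hi, Finset.sum_const_zero, add_zero]
    have inner3 : ∀ g : Fin 3, ∑ q, A (Sum.inr (Sum.inr g)) q * x q * x (Sum.inr (Sum.inr g)) * (χF (Sum.inr (Sum.inr g)) * χP q + χP (Sum.inr (Sum.inr g)) * χF q) = 0 := by
      intro g
      have t : ∀ q, A (Sum.inr (Sum.inr g)) q * x q * x (Sum.inr (Sum.inr g)) * (χF (Sum.inr (Sum.inr g)) * χP q + χP (Sum.inr (Sum.inr g)) * χF q) = 0 := by
        intro q
        simp only [hχF, hχP, Sum.elim_inr]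
        ring
      simp only [t, Finset.sum_const_zero]
    rw [Fintype.sum_sum_type, Fintype.sum_sum_type]
    simp only [inner1, inner2, inner3, Finset.sum_const_zero, add_zero]
    rw [Finset.sum_ite_eq', ← Finset.sum_mul]
    simp only [Finset.mem_univ, if_true]
    ring
  have hMain : ∑ p, ∑ q, A' (φ p) (φ q) * y (φ q) * y (φ p)
      = (∑ p, ∑ q, A p q * x q * x p)
        - 2 * ((∑ v : V, if v ∈ R then x (Sum.inl v) else 0) * x (Sum.inr (Sum.inl 0))) := by
    calc ∑ p, ∑ q, A' (φ p) (φ q) * y (φ q) * y (φ p)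
        = ∑ p, ∑ q, (A p q * x q * x p - A p q * x q * x p * (χF p * χP q + χP p * χF q)) :=
          Finset.sum_congr rfl fun p _ => Finset.sum_congr rfl fun q _ => pc p q
      _ = (∑ p, ∑ q, A p q * x q * x p)
          - ∑ p, ∑ q, A p q * x q * x p * (χF p * χP q + χP p * χF q) := by
          rw [← Finset.sum_sub_distrib]
          exact Finset.sum_congr rfl fun p _ => Finset.sum_sub_distrib _ _
      _ = _ := by rw [csum]
  have key : ∑ p, ∑ q, A' p q * y q * y p
      = (∑ p, ∑ q, A p q * x q * x p)
        - 2 * (x (Sum.inr (Sum.inl 0)) * x (Sum.inr (Sum.inl 0))) := by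
    have h1 : ∑ p, ∑ q, A' p q * y q * y p
        = (∑ q, A' (Sum.inr (Sum.inl 0)) q * y q * y (Sum.inr (Sum.inl 0)))
          + ∑ p : V ⊕ Fin (ℓ + 1) ⊕ Fin 3, ∑ q, A' (φ p) q * y q * y (φ p) :=
      sum_reindex _
    have h2 : (∑ q, A' (Sum.inr (Sum.inl 0)) q * y q * y (Sum.inr (Sum.inl 0)))
        = A' (Sum.inr (Sum.inl 0)) (Sum.inr (Sum.inl 0)) * y (Sum.inr (Sum.inl 0)) * y (Sum.inr (Sum.inl 0))
          + ∑ q : V ⊕ Fin (ℓ + 1) ⊕ Fin 3, A' (Sum.inr (Sum.inl 0)) (φ q) * y (φ q) * y (Sum.inr (Sum.inl 0)) :=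
      sum_reindex _
    have h3 : ∀ p : V ⊕ Fin (ℓ + 1) ⊕ Fin 3, ∑ q, A' (φ p) q * y q * y (φ p)
        = A' (φ p) (Sum.inr (Sum.inl 0)) * y (Sum.inr (Sum.inl 0)) * y (φ p)
          + ∑ q : V ⊕ Fin (ℓ + 1) ⊕ Fin 3, A' (φ p) (φ q) * y (φ q) * y (φ p) :=
      fun p => sum_reindex _
    rw [h1, h2, hd0]
    simp only [h3]
    rw [Finset.sum_add_distrib, hT1, hT2, hMain]
    ring
  have hN : ∑ p, y p * y p
      = (∑ p, x p * x p) + x (Sum.inr (Sum.inl 0)) * x (Sum.inr (Sum.inl 0)) := by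
    have h1 : ∑ p, y p * y p
        = y (Sum.inr (Sum.inl 0)) * y (Sum.inr (Sum.inl 0))
          + ∑ p : V ⊕ Fin (ℓ + 1) ⊕ Fin 3, y (φ p) * y (φ p) :=
      sum_reindex _
    have hb : ∀ p : V ⊕ Fin (ℓ + 1) ⊕ Fin 3, y (φ p) * y (φ p) = x p * x p := by
      rintro (v | i | g)
      · rw [hφ1, hy1]; ring
      · rw [hφ2, hy2]
      · rw [hφ3, hy3]
    rw [h1, hy0]
    simp only [hb]
    ring
  rw [hQ'e, key, hN]
  rw [hQe] at hx
  linarith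
end
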